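/- Fix k ≥ 3 and positive values λᵢ*, ϱᵢ, Rᵢ*, Iᵢ* with Σ_{j≠i} Rⱼ* = ϱᵢ/λᵢ* for all i. If for all i, (ϱᵢIᵢ*)/Rᵢ* + λᵢ*Iᵢ* = Σ_{j=1}^k λⱼ*Iⱼ*, then for all i, Iᵢ* = (Rᵢ*/λᵢ*)/(Σ_{j=1}^k Rⱼ*/λⱼ*) · (n − R*), where R* = Σ_{j=1}^k Rⱼ* and n = Σ_{j=1}^k (Iⱼ* + Rⱼ*). -/

import Mathlib

open Finset

theorem stmt_12 (k : ℕ) (hk : 3 ≤ k) (lam rho Rs Is : Fin k → ℝ)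
    (hlam : ∀ i, 0 < lam i) (hrho : ∀ i, 0 < rho i)
    (hRs : ∀ i, 0 < Rs i) (hIs : ∀ i, 0 < Is i)
    (heqR : ∀ i, ∑ j ∈ univ.erase i, Rs j = rho i / lam i)
    (heqI : ∀ i, rho i * Is i / Rs i + lam i * Is i = ∑ j, lam j * Is j) :
    ∀ i, Is i =
      ((Rs i / lam i) / ∑ j, Rs j / lam j) *
        ((∑ j, (Is j + Rs j)) - ∑ j, Rs j) := by
  haveI : NeZero k := ⟨by omega⟩
  set R : ℝ := ∑ j, Rs j with hR
  set S : ℝ := ∑ j, lam j * Is j with hS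
  set T : ℝ := ∑ j, Rs j / lam j with hT
  have hRpos : 0 < R := Finset.sum_pos (fun j _ => hRs j) univ_nonempty
  have hTpos : 0 < T :=
    Finset.sum_pos (fun j _ => div_pos (hRs j) (hlam j)) univ_nonempty
  have hkey : ∀ j, Is j = S * Rs j / (lam j * R) := by
    intro j
    have h3 : ∑ x ∈ univ.erase j, Rs x = R - Rs j := by
      rw [hR, ← Finset.sum_erase_add univ Rs (mem_univ j)]; ring
    have h2 := heqR j
    rw [h3] at h2
    have hlj := (hlam j).ne'
    have h1 : rho j = lam j * (R - Rs j) := by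
      field_simp at h2; linarith
    have h4 := heqI j
    rw [h1] at h4
    have hRj := (hRs j).ne'
    field_simp at h4 ⊢
    nlinarith [h4]
  have hsumI : ∑ j, Is j = S / R * T := by
    rw [hT, Finset.mul_sum]
    refine Finset.sum_congr rfl fun j _ => ?_
    rw [hkey j]
    field_simp
  intro i
  have hsplit : (∑ j, (Is j + Rs j)) - R = ∑ j, Is j := by
    rw [Finset.sum_add_distrib, hR]; ring
  rw [hsplit, hsumI, hkey i]
  field_simp
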